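/- Define ✠_n = {*L_{n-1}, *R_{n-1}, ..., *L_0, *R_0} for positive integers n, where *L_0 = *L, *R_0 = *R, *L_k = {*L_{k-1},...,*L_0}, *R_k = {*R_{k-1},...,*R_0}. Let G = ✠_{a_1} + ... + ✠_{a_n} + *L_{b_1} + ... + *L_{b_ℓ} + *R_{c_1} + ... + *R_{c_r} with a_1 ≤ ... ≤ a_n positive. Then: if n = 0, o(G) = L when r is even and o(G) = R when r is odd; if n = 1, o(G) = N; if n ≥ 2, then o(G) = P when a_3 ⊕ ... ⊕ a_n ⊕ b_1 ⊕ ... ⊕ b_ℓ ⊕ c_1 ⊕ ... ⊕ c_r = 0 and o(G) = N otherwise (⊕ is bitwise XOR). -/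

import Mathlib

/-- Positions of LR-ending partisan games: two terminals and finite option sets
(represented as lists; set-like behavior is captured by the `Iso` relation). -/
inductive Pos : Type
  | termL : Pos
  | termR : Pos
  | opts : List Pos → Pos

namespace Pos

/-- Valid positions: every non-terminal position has a nonempty set of options. -/
inductive Valid : Pos → Prop
  | termL : Valid termL
  | termR : Valid termR
  | opts : ∀ gs : List Pos, gs ≠ [] → (∀ g ∈ gs, Valid g) → Valid (opts gs)

/-- Disjunctive sum. -/
def sum : Pos → Pos → Pos
  | termL, termL => termL
  | termL, termR => termR
  | termR, termL => termR
  | termR, termR => termL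
  | termL, opts hs => opts (hs.attach.map (fun h => sum termL h.1))
  | termR, opts hs => opts (hs.attach.map (fun h => sum termR h.1))
  | opts gs, termL => opts (gs.attach.map (fun g => sum g.1 termL))
  | opts gs, termR => opts (gs.attach.map (fun g => sum g.1 termR))
  | opts gs, opts hs =>
      opts (gs.attach.map (fun g => sum g.1 (opts hs)) ++
            hs.attach.map (fun h => sum (opts gs) h.1))
termination_by g h => sizeOf g + sizeOf h
decreasing_by
  all_goals
    first
      | (have := List.sizeOf_lt_of_mem h.2; simp_all; omega)
      | (have := List.sizeOf_lt_of_mem g.2; simp_all; omega)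

/-- Conjugate: swap the two kinds of terminal positions. -/
def conj : Pos → Pos
  | termL => termR
  | termR => termL
  | opts gs => opts (gs.attach.map (fun g => conj g.1))
decreasing_by
  have := List.sizeOf_lt_of_mem g.2; simp_all; omega

/-- Isomorphism of game trees (positions viewed as sets of options). -/
def Iso : Pos → Pos → Prop
  | termL, termL => True
  | termR, termR => True
  | opts gs, opts hs =>
      (∀ g ∈ gs.attach, ∃ h ∈ hs.attach, Iso g.1 h.1) ∧
      (∀ h ∈ hs.attach, ∃ g ∈ gs.attach, Iso g.1 h.1)
  | _, _ => False
termination_by g h => sizeOf g + sizeOf h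
decreasing_by
  all_goals
    (have hg := List.sizeOf_lt_of_mem g.2; have hh := List.sizeOf_lt_of_mem h.2;
     simp_all; omega)

inductive Player : Type
  | left : Player
  | right : Player
  deriving DecidableEq

/-- `Wins p b G` : player `p` has a winning strategy from position `G`,
where `b = true` means it is `p`'s turn to move and `b = false` means the
opponent is to move.  A terminal position is won by the player given by
its label, regardless of whose turn it is. -/
inductive Wins : Player → Bool → Pos → Prop
  | termL : ∀ b, Wins Player.left b termL
  | termR : ∀ b, Wins Player.right b termR
  | move : ∀ (p : Player) (gs : List Pos) (g : Pos), g ∈ gs →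
      Wins p false g → Wins p true (opts gs)
  | wait : ∀ (p : Player) (gs : List Pos),
      (∀ g, g ∈ gs → Wins p true g) → Wins p false (opts gs)

inductive Outcome : Type
  | L : Outcome
  | R : Outcome
  | N : Outcome
  | P : Outcome
  deriving DecidableEq

/-- The outcome of a position. -/
noncomputable def outcome (G : Pos) : Outcome := by
  classical
  exact
    if Wins Player.left true G then
      if Wins Player.left false G then Outcome.L else Outcome.N
    else
      if Wins Player.left false G then Outcome.P else Outcome.R

/-- Equivalence of positions: the outcome agrees in every (valid) context. -/
def equiv (G H : Pos) : Prop :=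
  ∀ X : Pos, Valid X → outcome (sum G X) = outcome (sum H X)

end Pos
namespace Pos

mutual
/-- `Ln n` is the position `*L_n`: `*L_0 = *L`, `*L_n = {*L_{n-1}, ..., *L_0}`. -/
def Ln : ℕ → Pos
  | 0 => termL
  | n + 1 => opts (LnList (n + 1))
termination_by n => 2 * n + 1
/-- `LnList n = [*L_{n-1}, ..., *L_0]`. -/
def LnList : ℕ → List Pos
  | 0 => []
  | n + 1 => Ln n :: LnList n
termination_by n => 2 * n
end

mutual
/-- `Rn n` is the position `*R_n`. -/
def Rn : ℕ → Pos
  | 0 => termR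
  | n + 1 => opts (RnList (n + 1))
termination_by n => 2 * n + 1
def RnList : ℕ → List Pos
  | 0 => []
  | n + 1 => Rn n :: RnList n
termination_by n => 2 * n
end

/-- `kome n` is `✠_n = {*L_{n-1}, *R_{n-1}, ..., *L_0, *R_0}` (for `n ≥ 1`). -/
def kome (n : ℕ) : Pos := opts (LnList n ++ RnList n)

mutual
/-- `starAux n` represents `★(n+1)`: `★1 = {*L, *R}`, `★n = {★(n-1),...,★1,*L,*R}`. -/
def starAux : ℕ → Pos
  | 0 => opts [termL, termR]
  | n + 1 => opts (starList (n + 1) ++ [termL, termR])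
termination_by n => 2 * n + 1
/-- `starList n = [★n, ..., ★1]`. -/
def starList : ℕ → List Pos
  | 0 => []
  | n + 1 => starAux n :: starList n
termination_by n => 2 * n
end

/-- `bigstar n` is `★n` (meaningful for `n ≥ 1`). -/
def bigstar (n : ℕ) : Pos := starAux (n - 1)

/-- Sum of a list of positions (`*L` is the empty sum, and `G + *L = G`). -/
def sumList (l : List Pos) : Pos := l.foldr sum termL

/-- Nim-sum (XOR) of a list of naturals. -/
def xorList (l : List ℕ) : ℕ := l.foldr (· ^^^ ·) 0

/-- Minimum excludant of a list of naturals. -/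
noncomputable def mexList (l : List ℕ) : ℕ := sInf {n : ℕ | n ∉ l}

end Pos

namespace Pos

/-! ### XOR list lemmas -/

@[simp] lemma xorList_nil : xorList [] = 0 := rfl
@[simp] lemma xorList_cons (a : ℕ) (l : List ℕ) : xorList (a :: l) = a ^^^ xorList l := rfl

instance : Std.Commutative (α := ℕ) (· ^^^ ·) := ⟨Nat.xor_comm⟩
instance : Std.Associative (α := ℕ) (· ^^^ ·) := ⟨Nat.xor_assoc⟩

lemma xorList_append (l₁ l₂ : List ℕ) :
    xorList (l₁ ++ l₂) = xorList l₁ ^^^ xorList l₂ := by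
  induction l₁ with
  | nil => simp
  | cons a t ih => simp [ih, Nat.xor_assoc]

lemma xorList_perm {l₁ l₂ : List ℕ} (h : l₁.Perm l₂) : xorList l₁ = xorList l₂ := by
  unfold xorList
  exact h.foldr_eq 0

lemma xorList_erase {a : ℕ} {l : List ℕ} (h : a ∈ l) :
    xorList (l.erase a) = a ^^^ xorList l := by
  have := xorList_perm (List.perm_cons_erase h)
  simp only [xorList_cons] at this
  rw [this, ← Nat.xor_assoc, Nat.xor_self, Nat.zero_xor]

lemma exists_testBit_of_xorList {l : List ℕ} {i : ℕ} (h : (xorList l).testBit i = true) :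
    ∃ u ∈ l, u.testBit i = true := by
  induction l with
  | nil => simp [Nat.zero_testBit] at h
  | cons a t ih =>
    simp only [xorList_cons, Nat.testBit_xor] at h
    by_cases ha : a.testBit i = true
    · exact ⟨a, List.mem_cons_self, ha⟩
    · have hx : (xorList t).testBit i = true := by
        cases htt : (xorList t).testBit i <;> simp_all
      obtain ⟨u, hu, hub⟩ := ih hx
      exact ⟨u, List.mem_cons_of_mem _ hu, hub⟩

lemma testBit_log2 {n : ℕ} (h : n ≠ 0) : n.testBit n.log2 = true := by
  have h1 := Nat.log2_self_le h
  have h2 : n < 2 ^ (n.log2 + 1) := Nat.lt_log2_self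
  have h3 : n / 2 ^ n.log2 = 1 := by
    apply Nat.div_eq_of_lt_le
    · simpa using h1
    · rw [pow_succ] at h2; omega

  simp [Nat.testBit, Nat.shiftRight_eq_div_pow, h3]

/-- The key nim lemma: if the xor of a list is nonzero, some element can be
decreased to make the xor zero. -/
lemma nim_key {l : List ℕ} (h : xorList l ≠ 0) :
    ∃ u ∈ l, u ^^^ xorList l < u := by
  set X := xorList l with hX
  set i := X.log2 with hi
  obtain ⟨u, hu, hub⟩ := exists_testBit_of_xorList (l := l) (i := i) (testBit_log2 h)
  refine ⟨u, hu, ?_⟩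
  apply Nat.lt_of_testBit i
  · simp [Nat.testBit_xor, hub, testBit_log2 h]; exact testBit_log2 h
  · exact hub
  · intro j hj
    have hXj : X.testBit j = false := by
      apply Nat.testBit_lt_two_pow
      calc X < 2 ^ (i + 1) := Nat.lt_log2_self
        _ ≤ 2 ^ j := Nat.pow_le_pow_right (by norm_num) hj
    simp [Nat.testBit_xor, hXj]

end Pos

namespace Pos

/-! ### sum equations -/

@[simp] lemma sum_LL : sum termL termL = termL := by rw [sum]
@[simp] lemma sum_LR : sum termL termR = termR := by rw [sum]
@[simp] lemma sum_RL : sum termR termL = termR := by rw [sum]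
@[simp] lemma sum_RR : sum termR termR = termL := by rw [sum]
lemma sum_L_opts (hs : List Pos) :
    sum termL (opts hs) = opts (hs.map (fun h => sum termL h)) := by rw [sum]; simp
lemma sum_R_opts (hs : List Pos) :
    sum termR (opts hs) = opts (hs.map (fun h => sum termR h)) := by rw [sum]; simp
lemma sum_opts_L (gs : List Pos) :
    sum (opts gs) termL = opts (gs.map (fun g => sum g termL)) := by rw [sum]; simp
lemma sum_opts_R (gs : List Pos) :
    sum (opts gs) termR = opts (gs.map (fun g => sum g termR)) := by rw [sum]; simp
lemma sum_opts_opts (gs hs : List Pos) :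
    sum (opts gs) (opts hs) =
      opts (gs.map (fun g => sum g (opts hs)) ++ hs.map (fun h => sum (opts gs) h)) := by
  rw [sum]; simp

/-! ### Ln / Rn equations -/

@[simp] lemma Ln_zero : Ln 0 = termL := by rw [Ln]
@[simp] lemma Rn_zero : Rn 0 = termR := by rw [Rn]
lemma Ln_succ (n : ℕ) : Ln (n + 1) = opts (LnList (n + 1)) := by rw [Ln]
lemma Rn_succ (n : ℕ) : Rn (n + 1) = opts (RnList (n + 1)) := by rw [Rn]
@[simp] lemma LnList_zero : LnList 0 = [] := by rw [LnList]
@[simp] lemma RnList_zero : RnList 0 = [] := by rw [RnList]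
lemma LnList_succ (n : ℕ) : LnList (n + 1) = Ln n :: LnList n := by rw [LnList]
lemma RnList_succ (n : ℕ) : RnList (n + 1) = Rn n :: RnList n := by rw [RnList]

lemma mem_LnList {n : ℕ} {z : Pos} : z ∈ LnList n ↔ ∃ j, j < n ∧ z = Ln j := by
  induction n with
  | zero => simp
  | succ m ih =>
    rw [LnList_succ]
    simp only [List.mem_cons, ih]
    constructor
    · rintro (rfl | ⟨j, hj, rfl⟩)
      · exact ⟨m, Nat.lt_succ_self m, rfl⟩
      · exact ⟨j, Nat.lt_succ_of_lt hj, rfl⟩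
    · rintro ⟨j, hj, rfl⟩
      rcases Nat.lt_succ_iff_lt_or_eq.mp hj with h | rfl
      · exact Or.inr ⟨j, h, rfl⟩
      · exact Or.inl rfl

lemma mem_RnList {n : ℕ} {z : Pos} : z ∈ RnList n ↔ ∃ j, j < n ∧ z = Rn j := by
  induction n with
  | zero => simp
  | succ m ih =>
    rw [RnList_succ]
    simp only [List.mem_cons, ih]
    constructor
    · rintro (rfl | ⟨j, hj, rfl⟩)
      · exact ⟨m, Nat.lt_succ_self m, rfl⟩
      · exact ⟨j, Nat.lt_succ_of_lt hj, rfl⟩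
    · rintro ⟨j, hj, rfl⟩
      rcases Nat.lt_succ_iff_lt_or_eq.mp hj with h | rfl
      · exact Or.inr ⟨j, h, rfl⟩
      · exact Or.inl rfl

end Pos

namespace Pos

/-! ### Abstract components -/

inductive C3 : Type
  | k : ℕ → C3
  | lh : ℕ → C3
  | rh : ℕ → C3

def cpos : C3 → Pos
  | .k a => kome a
  | .lh b => Ln b
  | .rh c => Rn c

def csize : C3 → ℕ
  | .k a => a
  | .lh b => b
  | .rh c => c

def isT : C3 → Prop
  | .k _ => False
  | .lh b => b = 0
  | .rh c => c = 0

def isRb : C3 → Bool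
  | .rh _ => true
  | _ => false

def isKb : C3 → Bool
  | .k _ => true
  | _ => false

def okC : C3 → Prop
  | .k a => 1 ≤ a
  | _ => True

def copts : C3 → List Pos
  | .k a => LnList a ++ RnList a
  | .lh b => LnList b
  | .rh c => RnList c

inductive step : C3 → C3 → Prop
  | kl {a j : ℕ} : j < a → step (.k a) (.lh j)
  | kr {a j : ℕ} : j < a → step (.k a) (.rh j)
  | ll {b j : ℕ} : j < b → step (.lh b) (.lh j)
  | rr {c j : ℕ} : j < c → step (.rh c) (.rh j)

inductive M : List C3 → List C3 → Prop
  | head {x y : C3} {l : List C3} : step x y → M (x :: l) (y :: l)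
  | tail {x : C3} {l l' : List C3} : M l l' → M (x :: l) (x :: l')

def Term (l : List C3) : Prop := ∀ x ∈ l, isT x

def sumC (l : List C3) : Pos := sumList (l.map cpos)

lemma sumC_nil : sumC [] = termL := rfl
lemma sumC_cons (x : C3) (l : List C3) : sumC (x :: l) = sum (cpos x) (sumC l) := rfl

lemma cpos_term {x : C3} (hx : isT x) : cpos x = termL ∨ cpos x = termR := by
  cases x with
  | k a => exact absurd hx id
  | lh b => cases b with
    | zero => left; simp [cpos]
    | succ m => exact absurd hx (Nat.succ_ne_zero m)
  | rh c => cases c with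
    | zero => right; simp [cpos]
    | succ m => exact absurd hx (Nat.succ_ne_zero m)

lemma cpos_opts {x : C3} (hx : ¬ isT x) : cpos x = opts (copts x) := by
  cases x with
  | k a => rfl
  | lh b =>
    cases b with
    | zero => exact absurd rfl hx
    | succ m => exact Ln_succ m
  | rh c =>
    cases c with
    | zero => exact absurd rfl hx
    | succ m => exact Rn_succ m

lemma not_step_of_isT {x y : C3} (hx : isT x) : ¬ step x y := by
  intro h
  cases h with
  | kl h => exact hx
  | kr h => exact hx
  | ll h => simp only [isT] at hx; omega
  | rr h => simp only [isT] at hx; omega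

lemma mem_copts {x : C3} {z : Pos} :
    z ∈ copts x ↔ ∃ y, step x y ∧ z = cpos y := by
  cases x with
  | k a =>
    simp only [copts, List.mem_append, mem_LnList, mem_RnList]
    constructor
    · rintro (⟨j, hj, rfl⟩ | ⟨j, hj, rfl⟩)
      · exact ⟨.lh j, step.kl hj, rfl⟩
      · exact ⟨.rh j, step.kr hj, rfl⟩
    · rintro ⟨y, hy, rfl⟩
      cases hy with
      | kl h => exact Or.inl ⟨_, h, rfl⟩
      | kr h => exact Or.inr ⟨_, h, rfl⟩
  | lh b =>
    simp only [copts, mem_LnList]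
    constructor
    · rintro ⟨j, hj, rfl⟩
      exact ⟨.lh j, step.ll hj, rfl⟩
    · rintro ⟨y, hy, rfl⟩
      cases hy with
      | ll h => exact ⟨_, h, rfl⟩
  | rh c =>
    simp only [copts, mem_RnList]
    constructor
    · rintro ⟨j, hj, rfl⟩
      exact ⟨.rh j, step.rr hj, rfl⟩
    · rintro ⟨y, hy, rfl⟩
      cases hy with
      | rr h => exact ⟨_, h, rfl⟩

lemma not_M_of_term {l l' : List C3} (hT : Term l) : ¬ M l l' := by
  intro h
  induction h with
  | head hs => exact not_step_of_isT (hT _ (List.mem_cons_self)) hs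
  | tail hm ih => exact ih (fun x hx => hT x (List.mem_cons_of_mem _ hx))

lemma M_cons_iff {x : C3} {l m : List C3} :
    M (x :: l) m ↔ (∃ y, step x y ∧ m = y :: l) ∨ (∃ l'', M l l'' ∧ m = x :: l'') := by
  constructor
  · intro h
    cases h with
    | head hs => exact Or.inl ⟨_, hs, rfl⟩
    | tail hm => exact Or.inr ⟨_, hm, rfl⟩
  · rintro (⟨y, hy, rfl⟩ | ⟨l'', hm, rfl⟩)
    · exact M.head hy
    · exact M.tail hm

lemma term_sum {l : List C3} (hT : Term l) :
    sumC l = if Even (l.countP isRb) then termL else termR := by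
  induction l with
  | nil => simp [sumC_nil]
  | cons x l ih =>
    have hx := hT x (List.mem_cons_self)
    have ih' := ih (fun y hy => hT y (List.mem_cons_of_mem _ hy))
    rw [sumC_cons]
    cases x with
    | k a => exact absurd hx id
    | lh b =>
      have hb : b = 0 := hx
      subst hb
      rw [List.countP_cons]
      simp only [isRb, cond_false, Bool.false_eq_true, if_false, Nat.add_zero]
      rw [ih']
      by_cases he : Even (l.countP isRb) <;> simp [he, cpos]
    | rh c =>
      have hc : c = 0 := hx
      subst hc
      rw [List.countP_cons]
      simp only [isRb, if_true]
      rw [ih']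
      by_cases he : Even (l.countP isRb) <;>
        simp [he, cpos, Nat.even_add_one]

lemma struct (l : List C3) :
    (Term l ∧ sumC l = if Even (l.countP isRb) then termL else termR) ∨
    (∃ os, sumC l = opts os ∧ ∀ z, z ∈ os ↔ ∃ l', M l l' ∧ z = sumC l') := by
  induction l with
  | nil => exact Or.inl ⟨fun x hx => absurd hx List.not_mem_nil, by simp [sumC_nil]⟩
  | cons x l ih =>
    by_cases hx : isT x
    · rcases ih with ⟨hT, hEq⟩ | ⟨os, hEq, hMem⟩
      · exact Or.inl ⟨fun y hy => by
          rcases List.mem_cons.mp hy with rfl | hy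
          exacts [hx, hT y hy], term_sum (fun y hy => by
          rcases List.mem_cons.mp hy with rfl | hy
          exacts [hx, hT y hy])⟩
      · right
        rcases cpos_term hx with hc | hc
        · refine ⟨os.map (fun h => sum termL h), by rw [sumC_cons, hc, hEq, sum_L_opts], ?_⟩
          intro z
          simp only [List.mem_map]
          constructor
          · rintro ⟨h, hh, rfl⟩
            obtain ⟨l', hM, rfl⟩ := (hMem h).mp hh
            exact ⟨x :: l', M.tail hM, by rw [sumC_cons, hc]⟩
          · rintro ⟨m, hM, rfl⟩
            rcases M_cons_iff.mp hM with ⟨y, hy, rfl⟩ | ⟨l'', hm, rfl⟩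
            · exact absurd hy (not_step_of_isT hx)
            · exact ⟨sumC l'', (hMem _).mpr ⟨l'', hm, rfl⟩, by rw [sumC_cons, hc]⟩
        · refine ⟨os.map (fun h => sum termR h), by rw [sumC_cons, hc, hEq, sum_R_opts], ?_⟩
          intro z
          simp only [List.mem_map]
          constructor
          · rintro ⟨h, hh, rfl⟩
            obtain ⟨l', hM, rfl⟩ := (hMem h).mp hh
            exact ⟨x :: l', M.tail hM, by rw [sumC_cons, hc]⟩
          · rintro ⟨m, hM, rfl⟩
            rcases M_cons_iff.mp hM with ⟨y, hy, rfl⟩ | ⟨l'', hm, rfl⟩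
            · exact absurd hy (not_step_of_isT hx)
            · exact ⟨sumC l'', (hMem _).mpr ⟨l'', hm, rfl⟩, by rw [sumC_cons, hc]⟩
    · right
      have hcx := cpos_opts hx
      rcases ih with ⟨hT, hEq⟩ | ⟨os, hEq, hMem⟩
      · -- tail terminal
        refine ⟨(copts x).map (fun g => sum g (sumC l)), ?_, ?_⟩
        · simp only [sumC_cons, hcx, hEq]
          by_cases he : Even (l.countP isRb)
          · simp only [if_pos he, sum_opts_L]
          · simp only [if_neg he, sum_opts_R]
        · intro z
          simp only [List.mem_map]
          constructor
          · rintro ⟨g, hg, rfl⟩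
            obtain ⟨y, hy, rfl⟩ := mem_copts.mp hg
            exact ⟨y :: l, M.head hy, by rw [sumC_cons]⟩
          · rintro ⟨m, hM, rfl⟩
            rcases M_cons_iff.mp hM with ⟨y, hy, rfl⟩ | ⟨l'', hm, rfl⟩
            · exact ⟨cpos y, mem_copts.mpr ⟨y, hy, rfl⟩, by rw [sumC_cons]⟩
            · exact absurd hm (not_M_of_term hT)
      · refine ⟨(copts x).map (fun g => sum g (sumC l)) ++ os.map (fun h => sum (cpos x) h),
          ?_, ?_⟩
        · rw [sumC_cons, hcx, hEq, sum_opts_opts, ← hEq, ← hcx]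
        · intro z
          simp only [List.mem_append, List.mem_map]
          constructor
          · rintro (⟨g, hg, rfl⟩ | ⟨h, hh, rfl⟩)
            · obtain ⟨y, hy, rfl⟩ := mem_copts.mp hg
              exact ⟨y :: l, M.head hy, by rw [sumC_cons]⟩
            · obtain ⟨l', hM, rfl⟩ := (hMem h).mp hh
              exact ⟨x :: l', M.tail hM, by rw [sumC_cons]⟩
          · rintro ⟨m, hM, rfl⟩
            rcases M_cons_iff.mp hM with ⟨y, hy, rfl⟩ | ⟨l'', hm, rfl⟩
            · exact Or.inl ⟨cpos y, mem_copts.mpr ⟨y, hy, rfl⟩, by rw [sumC_cons]⟩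
            · exact Or.inr ⟨sumC l'', (hMem _).mpr ⟨l'', hm, rfl⟩, by rw [sumC_cons]⟩

end Pos

namespace Pos

/-! ### Wins inversion lemmas -/

lemma wins_termL {p : Player} {b : Bool} : Wins p b termL ↔ p = Player.left := by
  constructor
  · intro h; cases h; rfl
  · rintro rfl; exact Wins.termL b

lemma wins_termR {p : Player} {b : Bool} : Wins p b termR ↔ p = Player.right := by
  constructor
  · intro h; cases h; rfl
  · rintro rfl; exact Wins.termR b

lemma wins_true_opts {p : Player} {gs : List Pos} :
    Wins p true (opts gs) ↔ ∃ g ∈ gs, Wins p false g := by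
  constructor
  · intro h
    cases h with
    | move _ _ g hg hw => exact ⟨g, hg, hw⟩
  · rintro ⟨g, hg, hw⟩
    exact Wins.move p gs g hg hw

lemma wins_false_opts {p : Player} {gs : List Pos} :
    Wins p false (opts gs) ↔ ∀ g ∈ gs, Wins p true g := by
  constructor
  · intro h
    cases h with
    | wait _ _ hw => exact hw
  · intro h
    exact Wins.wait p gs h

/-! ### xor helper -/

lemma xcl (a b : ℕ) : a ^^^ (a ^^^ b) = b := by
  rw [← Nat.xor_assoc, Nat.xor_self, Nat.zero_xor]

/-! ### sorted-list helpers -/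

lemma sorted_take_le_drop {s : List ℕ} {n : ℕ} (hs : List.Pairwise (· ≤ ·) s)
    {x y : ℕ} (hx : x ∈ s.take n) (hy : y ∈ s.drop n) : x ≤ y := by
  have h := hs
  rw [← List.take_append_drop n s, List.pairwise_append] at h
  exact h.2.2 x hx y hy

lemma sorted_erase {s : List ℕ} (hs : List.Pairwise (· ≤ ·) s) (a : ℕ) :
    List.Pairwise (· ≤ ·) (s.erase a) := List.Pairwise.sublist (List.erase_sublist) hs

lemma erase_head_of_min {t : List ℕ} {a : ℕ} (hs : List.Pairwise (· ≤ ·) t) (ha : a ∈ t)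
    (hmin : ∀ b ∈ t, a ≤ b) : t.erase a = t.tail := by
  cases t with
  | nil => cases ha
  | cons z t' =>
    have hz : a = z := by
      rcases List.mem_cons.mp ha with rfl | h
      · rfl
      · exact le_antisymm (hmin z (List.mem_cons_self))
          ((List.pairwise_cons.mp hs).1 a h)
    subst hz
    simp [List.erase_cons_head]

lemma drop2_erase_mem {s : List ℕ} {a : ℕ} (hs : List.Pairwise (· ≤ ·) s)
    (ha : a ∈ s.drop 2) : (s.erase a).drop 2 = (s.drop 2).erase a := by
  match s with
  | [] => cases ha
  | [x] => cases ha
  | [x, y] => cases ha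
  | x :: y :: t =>
    have hat : a ∈ t := ha
    have hsyt : List.Pairwise (· ≤ ·) (y :: t) := (List.pairwise_cons.mp hs).2
    have hst : List.Pairwise (· ≤ ·) t := (List.pairwise_cons.mp hsyt).2
    by_cases hax : a = x
    · subst hax
      rw [List.erase_cons_head]
      have hmin : ∀ b ∈ t, a ≤ b :=
        fun b hb => (List.pairwise_cons.mp hs).1 b (List.mem_cons_of_mem _ hb)
      show t.drop 1 = t.erase a
      rw [erase_head_of_min hst hat hmin, List.drop_one]
    · by_cases hay : a = y
      · subst hay
        rw [List.erase_cons_tail (by simpa using fun h => hax h.symm), List.erase_cons_head]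
        have hmin : ∀ b ∈ t, a ≤ b := fun b hb => (List.pairwise_cons.mp hsyt).1 b hb
        show t.drop 1 = t.erase a
        rw [erase_head_of_min hst hat hmin, List.drop_one]
      · rw [List.erase_cons_tail (by simpa using fun h => hax h.symm),
          List.erase_cons_tail (by simpa using fun h => hay h.symm)]
        rfl

lemma drop2_erase_notmem {s : List ℕ} {a : ℕ} (ha : a ∈ s) (hnd : a ∉ s.drop 2) :
    (s.erase a).drop 2 = s.drop 3 := by
  match s with
  | [] => cases ha
  | x :: t =>
    by_cases hax : a = x
    · subst hax
      rw [List.erase_cons_head]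
      rfl
    · have hat : a ∈ t := by
        rcases List.mem_cons.mp ha with rfl | h
        · exact absurd rfl hax
        · exact h
      rw [List.erase_cons_tail (by simpa using fun h => hax h.symm)]
      match t, hat with
      | y :: u, hat =>
        have hay : a = y := by
          rcases List.mem_cons.mp hat with rfl | h
          · rfl
          · exact absurd h (by simpa [List.drop] using hnd)
        subst hay
        rw [List.erase_cons_head]
        rfl

end Pos

namespace Pos

/-! ### Statistics of component lists -/

def asz : List C3 → List ℕ :=
  List.filterMap (fun x => match x with | .k a => some a | _ => none)
def bsz : List C3 → List ℕ :=
  List.filterMap (fun x => match x with | .lh b => some b | _ => none)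
def csz : List C3 → List ℕ :=
  List.filterMap (fun x => match x with | .rh c => some c | _ => none)

def nK (l : List C3) : ℕ := (asz l).length
def nR (l : List C3) : ℕ := (csz l).length

@[simp] lemma asz_nil : asz [] = [] := rfl
@[simp] lemma bsz_nil : bsz [] = [] := rfl
@[simp] lemma csz_nil : csz [] = [] := rfl
@[simp] lemma asz_cons_k (a : ℕ) (l : List C3) : asz (C3.k a :: l) = a :: asz l := rfl
@[simp] lemma asz_cons_lh (b : ℕ) (l : List C3) : asz (C3.lh b :: l) = asz l := rfl
@[simp] lemma asz_cons_rh (c : ℕ) (l : List C3) : asz (C3.rh c :: l) = asz l := rfl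
@[simp] lemma bsz_cons_k (a : ℕ) (l : List C3) : bsz (C3.k a :: l) = bsz l := rfl
@[simp] lemma bsz_cons_lh (b : ℕ) (l : List C3) : bsz (C3.lh b :: l) = b :: bsz l := rfl
@[simp] lemma bsz_cons_rh (c : ℕ) (l : List C3) : bsz (C3.rh c :: l) = bsz l := rfl
@[simp] lemma csz_cons_k (a : ℕ) (l : List C3) : csz (C3.k a :: l) = csz l := rfl
@[simp] lemma csz_cons_lh (b : ℕ) (l : List C3) : csz (C3.lh b :: l) = csz l := rfl
@[simp] lemma csz_cons_rh (c : ℕ) (l : List C3) : csz (C3.rh c :: l) = c :: csz l := rfl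
@[simp] lemma asz_append (l1 l2 : List C3) : asz (l1 ++ l2) = asz l1 ++ asz l2 :=
  List.filterMap_append
@[simp] lemma bsz_append (l1 l2 : List C3) : bsz (l1 ++ l2) = bsz l1 ++ bsz l2 :=
  List.filterMap_append
@[simp] lemma csz_append (l1 l2 : List C3) : csz (l1 ++ l2) = csz l1 ++ csz l2 :=
  List.filterMap_append

lemma mem_asz {a : ℕ} {l : List C3} : a ∈ asz l ↔ C3.k a ∈ l := by
  constructor
  · intro h
    obtain ⟨x, hx, hfx⟩ := List.mem_filterMap.mp h
    cases x with
    | k a' => simp only [Option.some.injEq] at hfx; subst hfx; exact hx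
    | lh b => simp at hfx
    | rh c => simp at hfx
  · intro h
    exact List.mem_filterMap.mpr ⟨C3.k a, h, rfl⟩

lemma mem_bsz {b : ℕ} {l : List C3} : b ∈ bsz l ↔ C3.lh b ∈ l := by
  constructor
  · intro h
    obtain ⟨x, hx, hfx⟩ := List.mem_filterMap.mp h
    cases x with
    | lh b' => simp only [Option.some.injEq] at hfx; subst hfx; exact hx
    | k a => simp at hfx
    | rh c => simp at hfx
  · intro h
    exact List.mem_filterMap.mpr ⟨C3.lh b, h, rfl⟩

lemma mem_csz {c : ℕ} {l : List C3} : c ∈ csz l ↔ C3.rh c ∈ l := by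
  constructor
  · intro h
    obtain ⟨x, hx, hfx⟩ := List.mem_filterMap.mp h
    cases x with
    | rh c' => simp only [Option.some.injEq] at hfx; subst hfx; exact hx
    | k a => simp at hfx
    | lh b => simp at hfx
  · intro h
    exact List.mem_filterMap.mpr ⟨C3.rh c, h, rfl⟩

/-! ### sorting -/

def srt (t : List ℕ) : List ℕ := t.insertionSort (· ≤ ·)

lemma srt_sorted (t : List ℕ) : List.Pairwise (· ≤ ·) (srt t) :=
  List.pairwise_insertionSort _ t

lemma srt_perm (t : List ℕ) : (srt t).Perm t := List.perm_insertionSort _ t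

lemma srt_congr {t u : List ℕ} (h : t.Perm u) : srt t = srt u :=
  List.Perm.eq_of_pairwise' (srt_sorted t) (srt_sorted u)
    ((srt_perm t).trans (h.trans (srt_perm u).symm))

lemma srt_self {t : List ℕ} (h : List.Pairwise (· ≤ ·) t) : srt t = t :=
  List.Perm.eq_of_pairwise' (srt_sorted t) h (srt_perm t)

/-! ### the invariant -/

def Xv (l : List C3) : ℕ :=
  xorList ((srt (asz l)).drop 2) ^^^ xorList (bsz l) ^^^ xorList (csz l)

def Wn (p : Player) (b : Bool) (l : List C3) : Prop :=
  if nK l = 0 then (p = Player.left ↔ Even (nR l))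
  else if nK l = 1 then b = true
  else (Xv l = 0 ↔ b = false)

def validL (l : List C3) : Prop := ∀ x ∈ l, okC x

def mu (l : List C3) : ℕ := (l.map csize).sum

/-! ### moves: decomposition and effects -/

lemma M_append_left (l1 : List C3) {l l' : List C3} (h : M l l') :
    M (l1 ++ l) (l1 ++ l') := by
  induction l1 with
  | nil => simpa
  | cons z t ih => exact M.tail ih

lemma M_intro {l : List C3} {x y : C3} (hx : x ∈ l) (hs : step x y) :
    ∃ l1 l2, l = l1 ++ x :: l2 ∧ M l (l1 ++ y :: l2) := by
  obtain ⟨l1, l2, rfl⟩ := List.append_of_mem hx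
  exact ⟨l1, l2, rfl, M_append_left l1 (M.head hs)⟩

lemma xor_left_comm (a b c : ℕ) : a ^^^ (b ^^^ c) = b ^^^ (a ^^^ c) := by
  rw [← Nat.xor_assoc, Nat.xor_comm a b, Nat.xor_assoc]

lemma M_decomp {l l' : List C3} (h : M l l') :
    ∃ l1 x y l2, step x y ∧ l = l1 ++ x :: l2 ∧ l' = l1 ++ y :: l2 := by
  induction h with
  | head hs => exact ⟨[], _, _, _, hs, rfl, rfl⟩
  | tail hm ih =>
    obtain ⟨l1, x', y', l2, hs, rfl, rfl⟩ := ih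
    exact ⟨_ :: l1, x', y', l2, hs, rfl, rfl⟩

lemma valid_M {l l' : List C3} (hv : validL l) (h : M l l') : validL l' := by
  obtain ⟨l1, x, y, l2, hs, rfl, rfl⟩ := M_decomp h
  intro z hz
  rcases List.mem_append.mp hz with hz | hz
  · exact hv z (List.mem_append.mpr (Or.inl hz))
  · rcases List.mem_cons.mp hz with rfl | hz
    · cases hs <;> trivial
    · exact hv z (List.mem_append.mpr (Or.inr (List.mem_cons_of_mem _ hz)))

lemma mu_M {l l' : List C3} (h : M l l') : mu l' < mu l := by
  obtain ⟨l1, x, y, l2, hs, rfl, rfl⟩ := M_decomp h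
  have hcs : csize y < csize x := by cases hs <;> simpa [csize]
  simp only [mu, List.map_append, List.map_cons, List.sum_append, List.sum_cons]
  omega

lemma exists_move {l : List C3} (hv : validL l) (hnt : ¬ Term l) : ∃ l', M l l' := by
  simp only [Term, not_forall] at hnt
  obtain ⟨x, hx, hnx⟩ := hnt
  have : ∃ y, step x y := by
    cases x with
    | k a =>
      have := hv _ hx
      exact ⟨C3.lh 0, step.kl (by simp [okC] at this; omega)⟩
    | lh b =>
      have hb : b ≠ 0 := hnx
      exact ⟨C3.lh 0, step.ll (Nat.pos_of_ne_zero hb)⟩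
    | rh c =>
      have hc : c ≠ 0 := hnx
      exact ⟨C3.rh 0, step.rr (Nat.pos_of_ne_zero hc)⟩
  obtain ⟨y, hy⟩ := this
  obtain ⟨l1, l2, _, hM⟩ := M_intro hx hy
  exact ⟨_, hM⟩

/-! ### effect of each move shape on statistics -/

lemma srt_asz_k_move {l1 l2 : List C3} {a : ℕ} {y : C3}
    (hy : asz [y] = []) :
    srt (asz (l1 ++ y :: l2)) = (srt (asz (l1 ++ C3.k a :: l2))).erase a := by
  have h1 : asz (l1 ++ y :: l2) = asz l1 ++ asz l2 := by
    have : asz (y :: l2) = asz l2 := by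
      have : asz (y :: l2) = asz [y] ++ asz l2 := (asz_append [y] l2).symm ▸ rfl
      rw [this, hy]; rfl
    simp [this]
  apply List.Perm.eq_of_pairwise' (srt_sorted _) (sorted_erase (srt_sorted _) a)
  have p1 : (srt (asz (l1 ++ y :: l2))).Perm (asz l1 ++ asz l2) := h1 ▸ srt_perm _
  have p2 : (srt (asz (l1 ++ C3.k a :: l2))).Perm (asz l1 ++ a :: asz l2) := by
    simpa using srt_perm (asz (l1 ++ C3.k a :: l2))
  have p3 := p2.erase a
  have p4 : ((asz l1 ++ a :: asz l2).erase a).Perm (asz l1 ++ asz l2) := by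
    have h5 := (List.perm_middle (a := a) (l₁ := asz l1) (l₂ := asz l2)).erase a
    rwa [List.erase_cons_head] at h5
  exact p1.trans (p3.trans p4).symm

lemma mem_srt_asz {l1 l2 : List C3} {a : ℕ} :
    a ∈ srt (asz (l1 ++ C3.k a :: l2)) := by
  rw [(srt_perm _).mem_iff]
  simp

/-- Xv after resolving a kome of size `a` into a heap of size `v`. -/
lemma Xv_k {l l' : List C3} {a v : ℕ} (hva : v < a)
    (hmem : a ∈ srt (asz l))
    (hsrt : srt (asz l') = (srt (asz l)).erase a)
    (hheap : xorList (bsz l') ^^^ xorList (csz l') =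
      (xorList (bsz l) ^^^ xorList (csz l)) ^^^ v)
    (hnk : 2 ≤ nK l') :
    ∃ e, v < e ∧ Xv l' = Xv l ^^^ e ^^^ v ∧ (a ∈ (srt (asz l)).drop 2 → e = a) := by
  set s := srt (asz l) with hs
  have hss : List.Pairwise (· ≤ ·) s := srt_sorted _
  by_cases hd : a ∈ s.drop 2
  · refine ⟨a, hva, ?_, fun _ => rfl⟩
    have h1 : (srt (asz l')).drop 2 = (s.drop 2).erase a := by
      rw [hsrt]; exact drop2_erase_mem hss hd
    have h2 : xorList ((s.drop 2).erase a) = a ^^^ xorList (s.drop 2) := xorList_erase hd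
    have e1 : Xv l' = xorList ((srt (asz l')).drop 2) ^^^
        (xorList (bsz l') ^^^ xorList (csz l')) := by rw [Xv, Nat.xor_assoc]
    rw [e1, hheap, h1, h2, Xv, ← hs]
    simp [Nat.xor_assoc, Nat.xor_comm, xor_left_comm]
  · -- a is among the two smallest
    have hlen : 2 < s.length := by
      have h1 : s.length = (asz l).length := (srt_perm _).length_eq
      have h2 : (srt (asz l')).length = (asz l').length := (srt_perm _).length_eq
      have h3 : (srt (asz l')).length = s.length - 1 := by
        rw [hsrt]; rw [List.length_erase_of_mem hmem]
      have := hnk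
      simp only [nK] at this
      omega
    have hdrop : s.drop 2 = s[2] :: s.drop 3 := List.drop_eq_getElem_cons hlen
    refine ⟨s[2], ?_, ?_, fun h => absurd h hd⟩
    · -- v < a ≤ s[2]
      have hatake : a ∈ s.take 2 := by
        have := List.take_append_drop 2 s
        have hmem' : a ∈ s.take 2 ++ s.drop 2 := by rw [this]; exact hmem
        rcases List.mem_append.mp hmem' with h | h
        · exact h
        · exact absurd h hd
      have h2mem : s[2] ∈ s.drop 2 := by rw [hdrop]; exact List.mem_cons_self
      have := sorted_take_le_drop hss hatake h2mem
      omega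
    · have h1 : (srt (asz l')).drop 2 = s.drop 3 := by
        rw [hsrt]; exact drop2_erase_notmem hmem hd
      have h2 : xorList (s.drop 2) = s[2] ^^^ xorList (s.drop 3) := by
        rw [hdrop, xorList_cons]
      have h3 : xorList (s.drop 3) = s[2] ^^^ xorList (s.drop 2) := by
        rw [h2, xcl]
      have e1 : Xv l' = xorList ((srt (asz l')).drop 2) ^^^
          (xorList (bsz l') ^^^ xorList (csz l')) := by rw [Xv, Nat.xor_assoc]
      rw [e1, hheap, h1, h3, Xv, ← hs]
      simp [Nat.xor_assoc, Nat.xor_comm, xor_left_comm]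

end Pos

namespace Pos

lemma heap_lh_stats (l1 l2 : List C3) (b j : ℕ) :
    nK (l1 ++ C3.lh j :: l2) = nK (l1 ++ C3.lh b :: l2) ∧
    nR (l1 ++ C3.lh j :: l2) = nR (l1 ++ C3.lh b :: l2) ∧
    Xv (l1 ++ C3.lh j :: l2) = Xv (l1 ++ C3.lh b :: l2) ^^^ b ^^^ j := by
  refine ⟨by simp [nK] <;> omega, by simp [nR] <;> omega, ?_⟩
  simp [Xv, xorList_append, xorList_cons, Nat.xor_assoc, Nat.xor_comm, xor_left_comm, xcl, Nat.xor_self, Nat.xor_zero, Nat.zero_xor]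

lemma heap_rh_stats (l1 l2 : List C3) (c j : ℕ) :
    nK (l1 ++ C3.rh j :: l2) = nK (l1 ++ C3.rh c :: l2) ∧
    nR (l1 ++ C3.rh j :: l2) = nR (l1 ++ C3.rh c :: l2) ∧
    Xv (l1 ++ C3.rh j :: l2) = Xv (l1 ++ C3.rh c :: l2) ^^^ c ^^^ j := by
  refine ⟨by simp [nK] <;> omega, by simp [nR] <;> omega, ?_⟩
  simp [Xv, xorList_append, xorList_cons, Nat.xor_assoc, Nat.xor_comm, xor_left_comm, xcl, Nat.xor_self, Nat.xor_zero, Nat.zero_xor]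

lemma k_lh_stats (l1 l2 : List C3) (a j : ℕ) :
    nK (l1 ++ C3.k a :: l2) = nK (l1 ++ C3.lh j :: l2) + 1 ∧
    nR (l1 ++ C3.lh j :: l2) = nR (l1 ++ C3.k a :: l2) ∧
    a ∈ srt (asz (l1 ++ C3.k a :: l2)) ∧
    srt (asz (l1 ++ C3.lh j :: l2)) = (srt (asz (l1 ++ C3.k a :: l2))).erase a ∧
    xorList (bsz (l1 ++ C3.lh j :: l2)) ^^^ xorList (csz (l1 ++ C3.lh j :: l2)) =
      (xorList (bsz (l1 ++ C3.k a :: l2)) ^^^ xorList (csz (l1 ++ C3.k a :: l2))) ^^^ j := by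
  refine ⟨by simp [nK] <;> omega, by simp [nR] <;> omega, mem_srt_asz, srt_asz_k_move rfl, ?_⟩
  simp [xorList_append, xorList_cons, Nat.xor_assoc, Nat.xor_comm, xor_left_comm, xcl, Nat.xor_self, Nat.xor_zero, Nat.zero_xor]

lemma k_rh_stats (l1 l2 : List C3) (a j : ℕ) :
    nK (l1 ++ C3.k a :: l2) = nK (l1 ++ C3.rh j :: l2) + 1 ∧
    nR (l1 ++ C3.rh j :: l2) = nR (l1 ++ C3.k a :: l2) + 1 ∧
    a ∈ srt (asz (l1 ++ C3.k a :: l2)) ∧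
    srt (asz (l1 ++ C3.rh j :: l2)) = (srt (asz (l1 ++ C3.k a :: l2))).erase a ∧
    xorList (bsz (l1 ++ C3.rh j :: l2)) ^^^ xorList (csz (l1 ++ C3.rh j :: l2)) =
      (xorList (bsz (l1 ++ C3.k a :: l2)) ^^^ xorList (csz (l1 ++ C3.k a :: l2))) ^^^ j := by
  refine ⟨by simp [nK] <;> omega, by simp [nR] <;> omega, mem_srt_asz, srt_asz_k_move rfl, ?_⟩
  simp [xorList_append, xorList_cons, Nat.xor_assoc, Nat.xor_comm, xor_left_comm, xcl, Nat.xor_self, Nat.xor_zero, Nat.zero_xor]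

lemma M_effect {l l' : List C3} (h : M l l') :
    (∃ u v, v < u ∧ nK l' = nK l ∧ nR l' = nR l ∧ Xv l' = Xv l ^^^ u ^^^ v)
  ∨ (∃ a v, v < a ∧ nK l = nK l' + 1 ∧ a ∈ srt (asz l) ∧
      srt (asz l') = (srt (asz l)).erase a ∧
      xorList (bsz l') ^^^ xorList (csz l') =
        (xorList (bsz l) ^^^ xorList (csz l)) ^^^ v) := by
  obtain ⟨l1, x, y, l2, hs, rfl, rfl⟩ := M_decomp h
  cases hs with
  | @kl a j hj =>
    obtain ⟨h1, h2, h3, h4, h5⟩ := k_lh_stats l1 l2 a j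
    exact Or.inr ⟨a, j, hj, h1, h3, h4, h5⟩
  | @kr a j hj =>
    obtain ⟨h1, h2, h3, h4, h5⟩ := k_rh_stats l1 l2 a j
    exact Or.inr ⟨a, j, hj, h1, h3, h4, h5⟩
  | @ll b j hj =>
    obtain ⟨h1, h2, h3⟩ := heap_lh_stats l1 l2 b j
    exact Or.inl ⟨b, j, hj, h1, h2, h3⟩
  | @rr c j hj =>
    obtain ⟨h1, h2, h3⟩ := heap_rh_stats l1 l2 c j
    exact Or.inl ⟨c, j, hj, h1, h2, h3⟩

lemma nK_eq_len_srt (l : List C3) : nK l = (srt (asz l)).length := by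
  rw [nK, (srt_perm (asz l)).length_eq]

lemma A1 {l l' : List C3} (h : M l l') (hX : Xv l = 0) (hnk' : 2 ≤ nK l') :
    Xv l' ≠ 0 := by
  rcases M_effect h with ⟨u, v, huv, _, _, hXv⟩ | ⟨a, v, hva, hnk, hmem, hsrt, hheap⟩
  · rw [hXv, hX, Nat.zero_xor]
    intro hc
    rw [xor_eq_zero_iff] at hc
    omega
  · obtain ⟨e, hve, hXv, _⟩ := Xv_k hva hmem hsrt hheap hnk'
    rw [hXv, hX, Nat.zero_xor]
    intro hc
    rw [xor_eq_zero_iff] at hc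
    omega

lemma A2 {l : List C3} (hnk : 2 ≤ nK l) (hX : Xv l ≠ 0) :
    ∃ l', M l l' ∧ 2 ≤ nK l' ∧ Xv l' = 0 := by
  have hXl : Xv l = xorList ((srt (asz l)).drop 2 ++ bsz l ++ csz l) := by
    rw [xorList_append, xorList_append, Xv]
  obtain ⟨u, hu, hlt⟩ := nim_key (l := (srt (asz l)).drop 2 ++ bsz l ++ csz l)
    (by rw [← hXl]; exact hX)
  rw [← hXl] at hlt
  set v := u ^^^ Xv l with hv
  have hXv0 : ∀ w : ℕ, w = Xv l ^^^ u ^^^ v → w = 0 := by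
    intro w hw
    rw [hw, hv, Nat.xor_assoc, xcl, Nat.xor_self]
  rcases List.mem_append.mp hu with hu' | hcu
  · rcases List.mem_append.mp hu' with hdu | hbu
    · -- kome move
      have hus : u ∈ srt (asz l) := List.mem_of_mem_drop hdu
      have hkl : C3.k u ∈ l := mem_asz.mp ((srt_perm (asz l)).mem_iff.mp hus)
      obtain ⟨l1, l2, hldec, hM⟩ := M_intro hkl (step.kl hlt)
      have hlen : 3 ≤ (srt (asz l)).length := by
        have h1 : ((srt (asz l)).drop 2).length = (srt (asz l)).length - 2 :=
          List.length_drop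
        have h2 : 0 < ((srt (asz l)).drop 2).length := List.length_pos_iff.mpr
          (List.ne_nil_of_mem hdu)
        omega
      obtain ⟨h1, h2, h3, h4, h5⟩ := k_lh_stats l1 l2 u v
      rw [← hldec] at h1 h3 h4 h5
      have hnk' : 2 ≤ nK (l1 ++ C3.lh v :: l2) := by
        have := nK_eq_len_srt l
        omega
      refine ⟨l1 ++ C3.lh v :: l2, hM, hnk', ?_⟩
      obtain ⟨e, hve, hXv, he⟩ := Xv_k hlt hus h4 h5 hnk'
      rw [he hdu] at hXv
      exact hXv0 _ hXv
    · -- lh heap move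
      have hbl : C3.lh u ∈ l := mem_bsz.mp hbu
      obtain ⟨l1, l2, hldec, hM⟩ := M_intro hbl (step.ll hlt)
      obtain ⟨h1, h2, h3⟩ := heap_lh_stats l1 l2 u v
      rw [← hldec] at h1 h2 h3
      exact ⟨l1 ++ C3.lh v :: l2, hM, by omega, hXv0 _ h3⟩
  · -- rh heap move
    have hcl : C3.rh u ∈ l := mem_csz.mp hcu
    obtain ⟨l1, l2, hldec, hM⟩ := M_intro hcl (step.rr hlt)
    obtain ⟨h1, h2, h3⟩ := heap_rh_stats l1 l2 u v
    rw [← hldec] at h1 h2 h3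
    exact ⟨l1 ++ C3.rh v :: l2, hM, by omega, hXv0 _ h3⟩

end Pos

namespace Pos

lemma nR_countP (l : List C3) : nR l = l.countP isRb := by
  induction l with
  | nil => rfl
  | cons x t ih => cases x <;> simp [nR, List.countP_cons, isRb] <;>
      simp [nR] at ih <;> omega

lemma asz_term {l : List C3} (hT : Term l) : asz l = [] := by
  induction l with
  | nil => rfl
  | cons x t ih =>
    have hx := hT x (List.mem_cons_self)
    have ih' := ih (fun y hy => hT y (List.mem_cons_of_mem _ hy))
    cases x with
    | k a => exact absurd hx id
    | lh b => simpa using ih'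
    | rh c => simpa using ih'

lemma nK_of_M {l l' : List C3} (hM : M l l') :
    nK l' = nK l ∨ nK l = nK l' + 1 := by
  rcases M_effect hM with ⟨_, _, _, hk, _⟩ | ⟨_, _, _, hk, _⟩
  exacts [Or.inl hk, Or.inr hk]

lemma key1 {l : List C3} {p : Player} (hv : validL l) (hnt : ¬ Term l) :
    (∃ l', M l l' ∧ Wn p false l') ↔ Wn p true l := by
  rcases Nat.lt_or_ge (nK l) 1 with h0 | h1
  · -- no komes
    have hnk : nK l = 0 := by omega
    have hWt : Wn p true l ↔ (p = Player.left ↔ Even (nR l)) := by simp [Wn, hnk]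
    rw [hWt]
    constructor
    · rintro ⟨l', hM, hW⟩
      rcases M_effect hM with ⟨u, v, _, hk, hr, _⟩ | ⟨a, v, _, hk, _⟩
      · have hk0 : nK l' = 0 := by omega
        simpa [Wn, hk0, hr] using hW
      · omega
    · intro hW
      obtain ⟨l', hM⟩ := exists_move hv hnt
      refine ⟨l', hM, ?_⟩
      rcases M_effect hM with ⟨u, v, _, hk, hr, _⟩ | ⟨a, v, _, hk, _⟩
      · have hk0 : nK l' = 0 := by omega
        simpa [Wn, hk0, hr] using hW
      · omega
  · rcases Nat.lt_or_ge (nK l) 2 with h1' | h2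
    · -- exactly one kome
      have hnk : nK l = 1 := by omega
      have hWt : Wn p true l := by simp [Wn, hnk]
      simp only [hWt, iff_true]
      have hmem : ∃ a, a ∈ asz l := by
        rcases hasz : asz l with _ | ⟨a, t⟩
        · rw [nK, hasz] at hnk; simp at hnk
        · exact ⟨a, hasz ▸ (List.mem_cons_self (a := a) (l := t))⟩
      obtain ⟨a, ha⟩ := hmem
      have hkl : C3.k a ∈ l := mem_asz.mp ha
      have ha1 : 1 ≤ a := hv _ hkl
      by_cases hpe : (p = Player.left ↔ Even (nR l))
      · obtain ⟨l1, l2, hdec, hM⟩ := M_intro hkl (step.kl ha1)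
        obtain ⟨h1, h2, _, _, _⟩ := k_lh_stats l1 l2 a 0
        rw [← hdec] at h1 h2
        refine ⟨_, hM, ?_⟩
        have hk0 : nK (l1 ++ C3.lh 0 :: l2) = 0 := by omega
        simpa [Wn, hk0, h2] using hpe
      · obtain ⟨l1, l2, hdec, hM⟩ := M_intro hkl (step.kr ha1)
        obtain ⟨h1, h2, _, _, _⟩ := k_rh_stats l1 l2 a 0
        rw [← hdec] at h1 h2
        refine ⟨_, hM, ?_⟩
        have hk0 : nK (l1 ++ C3.rh 0 :: l2) = 0 := by omega
        have : (p = Player.left ↔ Even (nR l + 1)) := by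
          rw [Nat.even_add_one]
          tauto
        simpa [Wn, hk0, h2] using this
    · -- at least two komes
      have hWt : Wn p true l ↔ Xv l ≠ 0 := by
        simp [Wn, show ¬ nK l = 0 by omega, show ¬ nK l = 1 by omega]
      rw [hWt]
      constructor
      · rintro ⟨l', hM, hW⟩ h0
        by_cases hc : 2 ≤ nK l'
        · have hXv' : Xv l' = 0 := by
            simpa [Wn, show ¬ nK l' = 0 by omega, show ¬ nK l' = 1 by omega] using hW
          exact A1 hM h0 hc hXv'
        · have hk1 : nK l' = 1 := by rcases nK_of_M hM with h | h <;> omega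
          simp [Wn, hk1] at hW
      · intro hX
        obtain ⟨l', hM, hnk', hX'⟩ := A2 h2 hX
        refine ⟨l', hM, ?_⟩
        simp [Wn, show ¬ nK l' = 0 by omega, show ¬ nK l' = 1 by omega, hX']

lemma key2 {l : List C3} {p : Player} (hv : validL l) (hnt : ¬ Term l) :
    (∀ l', M l l' → Wn p true l') ↔ Wn p false l := by
  rcases Nat.lt_or_ge (nK l) 1 with h0 | h1
  · have hnk : nK l = 0 := by omega
    have hWt : Wn p false l ↔ (p = Player.left ↔ Even (nR l)) := by simp [Wn, hnk]
    rw [hWt]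
    constructor
    · intro hall
      obtain ⟨l', hM⟩ := exists_move hv hnt
      have hW := hall l' hM
      rcases M_effect hM with ⟨u, v, _, hk, hr, _⟩ | ⟨a, v, _, hk, _⟩
      · have hk0 : nK l' = 0 := by omega
        simpa [Wn, hk0, hr] using hW
      · omega
    · intro hW l' hM
      rcases M_effect hM with ⟨u, v, _, hk, hr, _⟩ | ⟨a, v, _, hk, _⟩
      · have hk0 : nK l' = 0 := by omega
        simpa [Wn, hk0, hr] using hW
      · omega
  · rcases Nat.lt_or_ge (nK l) 2 with h1' | h2
    · -- exactly one kome : second player loses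
      have hnk : nK l = 1 := by omega
      have hWf : ¬ Wn p false l := by simp [Wn, hnk]
      simp only [hWf, iff_false, not_forall]
      have hmem : ∃ a, a ∈ asz l := by
        rcases hasz : asz l with _ | ⟨a, t⟩
        · rw [nK, hasz] at hnk; simp at hnk
        · exact ⟨a, hasz ▸ (List.mem_cons_self (a := a) (l := t))⟩
      obtain ⟨a, ha⟩ := hmem
      have hkl : C3.k a ∈ l := mem_asz.mp ha
      have ha1 : 1 ≤ a := hv _ hkl
      by_cases hpe : (p = Player.left ↔ Even (nR l))
      · obtain ⟨l1, l2, hdec, hM⟩ := M_intro hkl (step.kr ha1)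
        obtain ⟨h1, h2, _, _, _⟩ := k_rh_stats l1 l2 a 0
        rw [← hdec] at h1 h2
        refine ⟨_, hM, ?_⟩
        have hk0 : nK (l1 ++ C3.rh 0 :: l2) = 0 := by omega
        have hne : ¬ (p = Player.left ↔ Even (nR l + 1)) := by
          rw [Nat.even_add_one]
          tauto
        simpa [Wn, hk0, h2] using hne
      · obtain ⟨l1, l2, hdec, hM⟩ := M_intro hkl (step.kl ha1)
        obtain ⟨h1, h2, _, _, _⟩ := k_lh_stats l1 l2 a 0
        rw [← hdec] at h1 h2
        refine ⟨_, hM, ?_⟩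
        have hk0 : nK (l1 ++ C3.lh 0 :: l2) = 0 := by omega
        simpa [Wn, hk0, h2] using hpe
    · have hWt : Wn p false l ↔ Xv l = 0 := by
        simp [Wn, show ¬ nK l = 0 by omega, show ¬ nK l = 1 by omega]
      rw [hWt]
      constructor
      · intro hall
        by_contra hX
        obtain ⟨l', hM, hnk', hX'⟩ := A2 h2 hX
        have hW := hall l' hM
        have : Xv l' ≠ 0 := by
          simpa [Wn, show ¬ nK l' = 0 by omega, show ¬ nK l' = 1 by omega] using hW
        exact this hX'
      · intro hX l' hM
        by_cases hc : 2 ≤ nK l'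
        · have := A1 hM hX hc
          simpa [Wn, show ¬ nK l' = 0 by omega, show ¬ nK l' = 1 by omega] using this
        · have hk1 : nK l' = 1 := by rcases nK_of_M hM with h | h <;> omega
          simp [Wn, hk1]

end Pos

namespace Pos

lemma main_aux (n : ℕ) :
    ∀ l : List C3, mu l = n → validL l → ∀ (p : Player) (b : Bool),
      (Wins p b (sumC l) ↔ Wn p b l) := by
  induction n using Nat.strong_induction_on with
  | _ n ih =>
    intro l hmu hv p b
    rcases struct l with ⟨hT, hEq⟩ | ⟨os, hEq, hMem⟩
    · -- terminal position
      have hnk : nK l = 0 := by simp [nK, asz_term hT]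
      rw [hEq]
      by_cases he : Even (l.countP isRb)
      · rw [if_pos he, wins_termL]
        simp [Wn, hnk, nR_countP, he]
      · rw [if_neg he, wins_termR]
        have : ¬ Even (nR l) := by rw [nR_countP]; exact he
        simp only [Wn, hnk, if_pos rfl, this, iff_false]
        cases p <;> simp
    · rw [hEq]
      have hnt : ¬ Term l := by
        intro hT
        have := term_sum hT
        rw [hEq] at this
        by_cases he : Even (l.countP isRb) <;> simp [he] at this
      cases b with
      | true =>
        rw [wins_true_opts]
        have hiff : (∃ g ∈ os, Wins p false g) ↔ ∃ l', M l l' ∧ Wn p false l' := by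
          constructor
          · rintro ⟨g, hg, hw⟩
            obtain ⟨l', hM, rfl⟩ := (hMem g).mp hg
            exact ⟨l', hM, (ih (mu l') (hmu ▸ mu_M hM) l' rfl (valid_M hv hM)
              p false).mp hw⟩
          · rintro ⟨l', hM, hW⟩
            exact ⟨sumC l', (hMem _).mpr ⟨l', hM, rfl⟩,
              (ih (mu l') (hmu ▸ mu_M hM) l' rfl (valid_M hv hM) p false).mpr hW⟩
        rw [hiff]
        exact key1 hv hnt
      | false =>
        rw [wins_false_opts]
        have hiff : (∀ g ∈ os, Wins p true g) ↔ ∀ l', M l l' → Wn p true l' := by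
          constructor
          · intro hall l' hM
            exact (ih (mu l') (hmu ▸ mu_M hM) l' rfl (valid_M hv hM) p true).mp
              (hall _ ((hMem _).mpr ⟨l', hM, rfl⟩))
          · intro hall g hg
            obtain ⟨l', hM, rfl⟩ := (hMem g).mp hg
            exact (ih (mu l') (hmu ▸ mu_M hM) l' rfl (valid_M hv hM) p true).mpr
              (hall l' hM)
        rw [hiff]
        exact key2 hv hnt

lemma main {l : List C3} (hv : validL l) (p : Player) (b : Bool) :
    Wins p b (sumC l) ↔ Wn p b l :=
  main_aux (mu l) l rfl hv p b

end Pos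

namespace Pos

lemma asz_map_k (as : List ℕ) : asz (as.map C3.k) = as := by
  induction as with
  | nil => rfl
  | cons a t ih => simp [ih]

lemma asz_map_lh (bs : List ℕ) : asz (bs.map C3.lh) = [] := by
  induction bs with
  | nil => rfl
  | cons a t ih => simp [ih]

lemma asz_map_rh (cs : List ℕ) : asz (cs.map C3.rh) = [] := by
  induction cs with
  | nil => rfl
  | cons a t ih => simp [ih]

lemma bsz_map_k (as : List ℕ) : bsz (as.map C3.k) = [] := by
  induction as with
  | nil => rfl
  | cons a t ih => simp [ih]

lemma bsz_map_lh (bs : List ℕ) : bsz (bs.map C3.lh) = bs := by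
  induction bs with
  | nil => rfl
  | cons a t ih => simp [ih]

lemma bsz_map_rh (cs : List ℕ) : bsz (cs.map C3.rh) = [] := by
  induction cs with
  | nil => rfl
  | cons a t ih => simp [ih]

lemma csz_map_k (as : List ℕ) : csz (as.map C3.k) = [] := by
  induction as with
  | nil => rfl
  | cons a t ih => simp [ih]

lemma csz_map_lh (bs : List ℕ) : csz (bs.map C3.lh) = [] := by
  induction bs with
  | nil => rfl
  | cons a t ih => simp [ih]

lemma csz_map_rh (cs : List ℕ) : csz (cs.map C3.rh) = cs := by
  induction cs with
  | nil => rfl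
  | cons a t ih => simp [ih]

lemma outcome_eq_L {G : Pos} (h1 : Wins Player.left true G)
    (h2 : Wins Player.left false G) : outcome G = Outcome.L := by
  simp [outcome, h1, h2]

lemma outcome_eq_N {G : Pos} (h1 : Wins Player.left true G)
    (h2 : ¬ Wins Player.left false G) : outcome G = Outcome.N := by
  simp [outcome, h1, h2]

lemma outcome_eq_P {G : Pos} (h1 : ¬ Wins Player.left true G)
    (h2 : Wins Player.left false G) : outcome G = Outcome.P := by
  simp [outcome, h1, h2]

lemma outcome_eq_R {G : Pos} (h1 : ¬ Wins Player.left true G)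
    (h2 : ¬ Wins Player.left false G) : outcome G = Outcome.R := by
  simp [outcome, h1, h2]

end Pos

/-- the outcome of `✠_{a_1} + ⋯ + ✠_{a_n} + *L_{b_1} + ⋯ + *L_{b_ℓ}
+ *R_{c_1} + ⋯ + *R_{c_r}` with `0 < a_1 ≤ ⋯ ≤ a_n`. -/
theorem kome_sum_outcome (as bs cs : List ℕ)
    (hsort : List.Pairwise (· ≤ ·) as) (hpos : ∀ a ∈ as, 1 ≤ a)
    (G : Pos) (hG : G = Pos.sumList (as.map Pos.kome ++ bs.map Pos.Ln ++ cs.map Pos.Rn)) :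
    (as = [] → (Even cs.length → Pos.outcome G = Pos.Outcome.L) ∧
               (¬ Even cs.length → Pos.outcome G = Pos.Outcome.R)) ∧
    (as.length = 1 → Pos.outcome G = Pos.Outcome.N) ∧
    (2 ≤ as.length →
      (Pos.xorList (as.drop 2) ^^^ Pos.xorList bs ^^^ Pos.xorList cs = 0 →
        Pos.outcome G = Pos.Outcome.P) ∧
      (Pos.xorList (as.drop 2) ^^^ Pos.xorList bs ^^^ Pos.xorList cs ≠ 0 →
        Pos.outcome G = Pos.Outcome.N)) := by
  classical
  set l : List Pos.C3 :=
    as.map Pos.C3.k ++ bs.map Pos.C3.lh ++ cs.map Pos.C3.rh with hl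
  have hsum : Pos.sumC l = Pos.sumList (as.map Pos.kome ++ bs.map Pos.Ln ++ cs.map Pos.Rn) := by
    simp only [Pos.sumC, hl, List.map_append, List.map_map]
    rfl
  have hG' : G = Pos.sumC l := by rw [hG, hsum]
  have hasz : Pos.asz l = as := by
    simp [hl, Pos.asz_map_k, Pos.asz_map_lh, Pos.asz_map_rh]
  have hbsz : Pos.bsz l = bs := by
    simp [hl, Pos.bsz_map_k, Pos.bsz_map_lh, Pos.bsz_map_rh]
  have hcsz : Pos.csz l = cs := by
    simp [hl, Pos.csz_map_k, Pos.csz_map_lh, Pos.csz_map_rh]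
  have hnk : Pos.nK l = as.length := by rw [Pos.nK, hasz]
  have hnr : Pos.nR l = cs.length := by rw [Pos.nR, hcsz]
  have hXv : Pos.Xv l = Pos.xorList (as.drop 2) ^^^ Pos.xorList bs ^^^ Pos.xorList cs := by
    rw [Pos.Xv, hasz, hbsz, hcsz, Pos.srt_self hsort]
  have hv : Pos.validL l := by
    intro x hx
    rw [hl] at hx
    rcases List.mem_append.mp hx with hx' | hx'
    · rcases List.mem_append.mp hx' with hx'' | hx''
      · obtain ⟨a, ha, rfl⟩ := List.mem_map.mp hx''
        exact hpos a ha
      · obtain ⟨b, hb, rfl⟩ := List.mem_map.mp hx''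
        trivial
    · obtain ⟨c, hc, rfl⟩ := List.mem_map.mp hx'
      trivial
  have hmain := fun (b : Bool) => Pos.main hv Pos.Player.left b
  rw [← hG'] at hmain
  refine ⟨?_, ?_, ?_⟩
  · rintro rfl
    have hnk0 : Pos.nK l = 0 := by simpa using hnk
    constructor
    · intro he
      exact Pos.outcome_eq_L
        ((hmain true).mpr (by simp [Pos.Wn, hnk0, hnr, he]))
        ((hmain false).mpr (by simp [Pos.Wn, hnk0, hnr, he]))
    · intro he
      refine Pos.outcome_eq_R ?_ ?_
      · intro hw
        have := (hmain true).mp hw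
        simp [Pos.Wn, hnk0, hnr] at this
        exact he this
      · intro hw
        have := (hmain false).mp hw
        simp [Pos.Wn, hnk0, hnr] at this
        exact he this
  · intro hlen
    have hnk1 : Pos.nK l = 1 := by rw [hnk, hlen]
    refine Pos.outcome_eq_N ?_ ?_
    · exact (hmain true).mpr (by simp [Pos.Wn, hnk1])
    · intro hw
      have := (hmain false).mp hw
      simp [Pos.Wn, hnk1] at this
  · intro hlen
    have hne0 : ¬ Pos.nK l = 0 := by omega
    have hne1 : ¬ Pos.nK l = 1 := by omega
    constructor
    · intro hx0
      refine Pos.outcome_eq_P ?_ ?_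
      · intro hw
        have := (hmain true).mp hw
        rw [Pos.Wn, if_neg hne0, if_neg hne1] at this
        rw [hXv] at this
        simp [hx0] at this
      · refine (hmain false).mpr ?_
        rw [Pos.Wn, if_neg hne0, if_neg hne1, hXv]
        simp [hx0]
    · intro hx0
      refine Pos.outcome_eq_N ?_ ?_
      · refine (hmain true).mpr ?_
        rw [Pos.Wn, if_neg hne0, if_neg hne1, hXv]
        simp [hx0]
      · intro hw
        have := (hmain false).mp hw
        rw [Pos.Wn, if_neg hne0, if_neg hne1, hXv] at this
        exact hx0 (this.mpr rfl)
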